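/- For the NFA A_n of the lower-bound construction, for every triple X = (p, q, r) ∈ Q³, the word a_X b_X a_X b_X is accepted by A_n; hence a_X b_X ∈ √L(A_n). -/

import Mathlib

/-- The function `l` of the lower-bound construction: `l(0)=1`, `l(1)=2`, else `0`. -/
def lf (n : ℕ) (hn : 6 ≤ n) (p : Fin n) : Fin n :=
  if p.val = 0 then ⟨1, by omega⟩ else if p.val = 1 then ⟨2, by omega⟩ else ⟨0, by omega⟩

/-- The function `m` of the lower-bound construction: `m(3)=4`, `m(4)=5`, else `3`. -/
def mf (n : ℕ) (hn : 6 ≤ n) (p : Fin n) : Fin n :=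
  if p.val = 3 then ⟨4, by omega⟩ else if p.val = 4 then ⟨5, by omega⟩ else ⟨3, by omega⟩

/-- The lower-bound NFA `A_n`: states `{0,…,n−1}`, initial states `{0,1,2}`,
final states `{3,4,5}`, alphabet `{a_X, b_X : X ∈ Q³}` encoded as
`Bool × Fin n × Fin n × Fin n` (`false` for `a_X`, `true` for `b_X`).
For `X = (p,q,r)`: `a_X` maps `l(p) ↦ q` and `p ↦ r`;
`b_X` maps `q ↦ p` and `r ↦ m(p)`. -/
def lowerNFA (n : ℕ) (hn : 6 ≤ n) : NFA (Bool × Fin n × Fin n × Fin n) (Fin n) where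
  step := fun s c =>
    match c with
    | (false, p, q, r) => (if s = lf n hn p then {q} else ∅) ∪ (if s = p then {r} else ∅)
    | (true, p, q, r) => (if s = q then {p} else ∅) ∪ (if s = r then {mf n hn p} else ∅)
  start := {s | s.val < 3}
  accept := {s | 3 ≤ s.val ∧ s.val < 6}

/-- For every triple `X`, the word `a_X b_X a_X b_X` is accepted by `A_n`;
hence `a_X b_X ∈ √L(A_n)`. -/
theorem lowerNFA_diagonal_accepted (n : ℕ) (hn : 6 ≤ n)
    (X : Fin n × Fin n × Fin n) :
    [(false, X), (true, X), (false, X), (true, X)] ∈ (lowerNFA n hn).accepts := by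
  obtain ⟨p, q, r⟩ := X
  refine ⟨mf n hn p, ?_, ?_⟩
  · simp only [lowerNFA, mf, Set.mem_setOf_eq]
    split_ifs <;> simp
  · show mf n hn p ∈ (lowerNFA n hn).evalFrom (lowerNFA n hn).start _
    simp only [NFA.evalFrom, List.foldl]
    refine NFA.mem_stepSet.2 ⟨r, NFA.mem_stepSet.2 ⟨p,
      NFA.mem_stepSet.2 ⟨q,
      NFA.mem_stepSet.2 ⟨lf n hn p, ?_, ?_⟩, ?_⟩, ?_⟩, ?_⟩
    · simp only [lowerNFA, lf, Set.mem_setOf_eq]; split_ifs <;> simp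
    · simp [lowerNFA]
    · simp [lowerNFA]
    · simp [lowerNFA]
    · simp [lowerNFA]
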